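/- Let K ∈ ℝ^{n×n} be symmetric positive definite, ψ ∈ ℝⁿ with ψ_v ∈ {−1,1}, K_ψ = diag(ψ)·K·diag(ψ), W = {w_1,…,w_N} distinct indices, y ∈ ℝⁿ, and γ > 0. Let y°_v = Σ_i c°_i K_ψ(v,w_i) with c° = ((K_ψ)_W)⁻¹ y|_W be the interpolant of the data (w_i, y(w_i)), and let y*_v = Σ_i c_i K_ψ(v,w_i) with c = ((K_ψ)_W + γN·I_N)⁻¹ y|_W be the RLS solution, where y|_W = (y(w_1),…,y(w_N))ᵀ. Then for every node v, |y°_v − y*_v| ≤ (γN·√(K(v,v)) / (λ_min(K_W) + γN)) · ‖y‖_{K_ψ}, where λ_min(K_W) is the smallest eigenvalue of the submatrix K_W of K, and ‖y‖_{K_ψ} = √(yᵀ (K_ψ)⁻¹ y). -/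

import Mathlib

open Matrix

namespace Stmt18Aux
variable {N n : ℕ}

lemma dot_symm {m : ℕ} {M : Matrix (Fin m) (Fin m) ℝ} (hM : Mᵀ = M) (x y : Fin m → ℝ) :
    x ⬝ᵥ (M *ᵥ y) = y ⬝ᵥ (M *ᵥ x) := by
  rw [dotProduct_mulVec, ← hM, vecMul_transpose, dotProduct_comm, hM]

lemma psd_cauchy {m : ℕ} {M : Matrix (Fin m) (Fin m) ℝ} (hM : M.PosSemidef) (x y : Fin m → ℝ) :
    (x ⬝ᵥ (M *ᵥ y))^2 ≤ (x ⬝ᵥ (M *ᵥ x)) * (y ⬝ᵥ (M *ᵥ y)) := by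
  have hMt : Mᵀ = M := by simpa using (show M.IsSymm by simpa using hM.1).eq
  have h : ∀ t : ℝ, 0 ≤ (y ⬝ᵥ (M *ᵥ y)) * (t * t) + (2 * (x ⬝ᵥ (M *ᵥ y))) * t + x ⬝ᵥ (M *ᵥ x) := by
    intro t
    have h0 := hM.dotProduct_mulVec_nonneg (x + t • y)
    simp only [star_trivial] at h0
    have hexp : (x + t • y) ⬝ᵥ (M *ᵥ (x + t • y)) =
        (y ⬝ᵥ (M *ᵥ y)) * (t * t) + (2 * (x ⬝ᵥ (M *ᵥ y))) * t + x ⬝ᵥ (M *ᵥ x) := by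
      rw [mulVec_add, dotProduct_add, add_dotProduct, add_dotProduct,
        mulVec_smul, dotProduct_smul, smul_dotProduct, smul_dotProduct,
        dotProduct_smul, dot_symm hMt y x]
      simp only [smul_eq_mul]; ring
    rw [hexp] at h0; exact h0
  have hd := discrim_le_zero h
  rw [discrim] at hd
  nlinarith [hd]

/-- extension by zero along `w` -/
def ext (w : Fin N → Fin n) (x : Fin N → ℝ) : Fin n → ℝ :=
  fun p => ∑ i, if p = w i then x i else 0

lemma ext_dot (w : Fin N → Fin n) (x : Fin N → ℝ) (u : Fin n → ℝ) :
    ext w x ⬝ᵥ u = ∑ i, x i * u (w i) := by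
  calc ext w x ⬝ᵥ u = ∑ p, ∑ i, (if p = w i then x i * u p else 0) := by
        simp [dotProduct, ext, Finset.sum_mul, ite_mul]
    _ = ∑ i, ∑ p, (if p = w i then x i * u p else 0) := Finset.sum_comm
    _ = ∑ i, x i * u (w i) := by simp

lemma mulVec_ext (M : Matrix (Fin n) (Fin n) ℝ) (w : Fin N → Fin n) (c : Fin N → ℝ) :
    M *ᵥ ext w c = fun p => ∑ i, c i * M p (w i) := by
  funext p
  rw [mulVec, dotProduct_comm, ext_dot]

lemma ext_quad (M : Matrix (Fin n) (Fin n) ℝ) (w : Fin N → Fin n) (x : Fin N → ℝ) :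
    ext w x ⬝ᵥ (M *ᵥ ext w x) = x ⬝ᵥ ((Matrix.of fun i j : Fin N => M (w i) (w j)) *ᵥ x) := by
  rw [mulVec_ext, ext_dot]
  simp only [dotProduct, mulVec, Matrix.of_apply, Finset.mul_sum]
  exact Finset.sum_congr rfl fun i _ => Finset.sum_congr rfl fun j _ => by ring

lemma ext_ne_zero {w : Fin N → Fin n} (hw : Function.Injective w) {x : Fin N → ℝ} (hx : x ≠ 0) :
    ext w x ≠ 0 := by
  obtain ⟨i, hi⟩ := Function.ne_iff.1 hx
  have : ext w x (w i) = x i := by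
    simp only [ext]
    rw [Finset.sum_eq_single i] <;> simp +contextual [hw.eq_iff, eq_comm]
  intro hz
  rw [hz] at this
  exact hi (by simpa using this.symm)

lemma posDef_submatrix {M : Matrix (Fin n) (Fin n) ℝ} (hM : M.PosDef)
    {w : Fin N → Fin n} (hw : Function.Injective w) :
    (Matrix.of fun i j : Fin N => M (w i) (w j)).PosDef := by
  refine Matrix.PosDef.of_dotProduct_mulVec_pos ?_ ?_
  · have : (Matrix.of fun i j : Fin N => M (w i) (w j)) = M.submatrix w w := rfl
    rw [this]
    exact (hM.posSemidef.submatrix w).1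
  · intro x hx
    have h := hM.dotProduct_mulVec_pos (ext_ne_zero hw hx)
    simp only [star_trivial] at h ⊢
    rwa [ext_quad] at h

end Stmt18Aux

open Stmt18Aux in
theorem stmt_18 {n N : ℕ} (K : Matrix (Fin n) (Fin n) ℝ) (hK : K.PosDef)
    (ψ : Fin n → ℝ) (hψ : ∀ v : Fin n, ψ v = 1 ∨ ψ v = -1)
    (w : Fin N → Fin n) (hw : Function.Injective w)
    (y : Fin n → ℝ) (γ : ℝ) (hγ : 0 < γ)
    (lmin : ℝ)
    (hlmin : IsGreatest {μ : ℝ | ∀ x : Fin N → ℝ,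
        μ * (x ⬝ᵥ x) ≤ x ⬝ᵥ ((Matrix.of fun i j : Fin N => K (w i) (w j)) *ᵥ x)} lmin)
    (Kψ : Matrix (Fin n) (Fin n) ℝ)
    (hKψ : Kψ = Matrix.diagonal ψ * K * Matrix.diagonal ψ)
    (KψW : Matrix (Fin N) (Fin N) ℝ)
    (hKψW : KψW = Matrix.of fun i j : Fin N => Kψ (w i) (w j))
    (c0 c : Fin N → ℝ)
    (hc0 : c0 = KψW⁻¹ *ᵥ fun i => y (w i))
    (hc : c = (KψW + (γ * (N : ℝ)) • (1 : Matrix (Fin N) (Fin N) ℝ))⁻¹ *ᵥ fun i => y (w i)) :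
    ∀ v : Fin n,
      |(∑ i : Fin N, c0 i * Kψ v (w i)) - ∑ i : Fin N, c i * Kψ v (w i)| ≤
        (γ * (N : ℝ) * Real.sqrt (K v v) / (lmin + γ * (N : ℝ))) *
          Real.sqrt (y ⬝ᵥ (Kψ⁻¹ *ᵥ y)) := by
  intro v
  rcases Nat.eq_zero_or_pos N with hN0 | hNpos
  · subst hN0
    simp [Real.sqrt_nonneg]
  have hNR : (0:ℝ) < N := by exact_mod_cast hNpos
  set t := γ * (N : ℝ) with ht
  have htpos : 0 < t := mul_pos hγ hNR
  -- basic facts about ψ and Kψ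
  have hψ2 : ∀ p, ψ p * ψ p = 1 := fun p => by rcases hψ p with h | h <;> rw [h] <;> norm_num
  have hKt : Kᵀ = K := by simpa using (show K.IsSymm by simpa using hK.1).eq
  have hent : ∀ p q, Kψ p q = ψ p * K p q * ψ q := by
    intro p q
    rw [hKψ]
    simp [Matrix.mul_diagonal, Matrix.diagonal_mul]
  have hKψt : Kψᵀ = Kψ := by
    rw [hKψ]
    simp [Matrix.transpose_mul, Matrix.diagonal_transpose, hKt, Matrix.mul_assoc]
  have hKψPD : Kψ.PosDef := by
    refine Matrix.PosDef.of_dotProduct_mulVec_pos ?_ ?_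
    · simpa using (show Kψ.IsSymm from hKψt)
    · intro x hx
      have hDx : (fun p => ψ p * x p) ≠ 0 := by
        intro h0
        apply hx
        funext p
        have hp := congrFun h0 p
        rcases hψ p with h | h <;> rw [h] at hp <;> simpa using hp
      have h := hK.dotProduct_mulVec_pos hDx
      simp only [star_trivial] at h ⊢
      have hquad : x ⬝ᵥ (Kψ *ᵥ x) =
          (fun p => ψ p * x p) ⬝ᵥ (K *ᵥ fun p => ψ p * x p) := by
        simp only [dotProduct, mulVec, Finset.mul_sum]
        refine Finset.sum_congr rfl fun p _ => Finset.sum_congr rfl fun q _ => ?_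
        rw [hent]; ring
      rwa [hquad]
  -- the kernel submatrix
  have hAPD : KψW.PosDef := by rw [hKψW]; exact posDef_submatrix hKψPD hw
  have hAt : KψWᵀ = KψW := by simpa using (show KψW.IsSymm by simpa using hAPD.1).eq
  have hAinvPD : KψW⁻¹.PosDef := hAPD.inv
  have hAinvPSD := hAinvPD.posSemidef
  have hAinvt : (KψW⁻¹)ᵀ = KψW⁻¹ := by simpa using (show KψW⁻¹.IsSymm by simpa using hAinvPD.1).eq
  have hAdet : IsUnit KψW.det := isUnit_iff_ne_zero.2 hAPD.det_pos.ne'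
  have hA1 : KψW * KψW⁻¹ = 1 := mul_nonsing_inv _ hAdet
  have hA2 : KψW⁻¹ * KψW = 1 := nonsing_inv_mul _ hAdet
  set B := KψW + t • (1 : Matrix (Fin N) (Fin N) ℝ) with hB
  have hBPD : B.PosDef := by
    refine hAPD.add_posSemidef ?_
    rw [Matrix.smul_one_eq_diagonal]
    exact Matrix.PosSemidef.diagonal fun _ => htpos.le
  have hBdet : IsUnit B.det := isUnit_iff_ne_zero.2 hBPD.det_pos.ne'
  have hB1 : B * B⁻¹ = 1 := mul_nonsing_inv _ hBdet
  set yW : Fin N → ℝ := fun i => y (w i) with hyW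
  set k : Fin N → ℝ := fun i => Kψ v (w i) with hk
  set u : Fin N → ℝ := B⁻¹ *ᵥ yW with hu
  -- the matrix identity A⁻¹ - B⁻¹ = t • (A⁻¹ B⁻¹)
  have hmat : KψW⁻¹ - B⁻¹ = t • (KψW⁻¹ * B⁻¹) := by
    have h1 : KψW⁻¹ * B * B⁻¹ - KψW⁻¹ * KψW * B⁻¹ = KψW⁻¹ - B⁻¹ := by
      rw [Matrix.mul_assoc KψW⁻¹ B B⁻¹, hB1, Matrix.mul_one, hA2, Matrix.one_mul]
    have h2 : B - KψW = t • (1 : Matrix (Fin N) (Fin N) ℝ) := by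
      rw [hB]; abel
    calc KψW⁻¹ - B⁻¹ = KψW⁻¹ * B * B⁻¹ - KψW⁻¹ * KψW * B⁻¹ := h1.symm
      _ = KψW⁻¹ * (B - KψW) * B⁻¹ := by rw [Matrix.mul_sub, Matrix.sub_mul]
      _ = t • (KψW⁻¹ * B⁻¹) := by
          rw [h2, mul_smul_comm, Matrix.mul_one, smul_mul_assoc]
  have hc0c : c0 - c = t • (KψW⁻¹ *ᵥ u) := by
    rw [hc0, hc, hu, ← sub_mulVec, hmat, smul_mulVec, ← mulVec_mulVec]
  have hdiff : (∑ i : Fin N, c0 i * Kψ v (w i)) - ∑ i : Fin N, c i * Kψ v (w i) =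
      t * (k ⬝ᵥ (KψW⁻¹ *ᵥ u)) := by
    have hs : (∑ i : Fin N, c0 i * Kψ v (w i)) - ∑ i : Fin N, c i * Kψ v (w i) =
        (c0 - c) ⬝ᵥ k := by
      simp [dotProduct, hk, sub_mul, Finset.sum_sub_distrib]
    rw [hs, hc0c, smul_dotProduct, smul_eq_mul, dotProduct_comm]
  -- lower bound facts from lmin
  have hlmin0 : 0 ≤ lmin := by
    refine hlmin.2 (fun x => ?_)
    rw [zero_mul, ← ext_quad]
    simpa using hK.posSemidef.dotProduct_mulVec_nonneg (ext w x)
  have hAlow : ∀ x : Fin N → ℝ, lmin * (x ⬝ᵥ x) ≤ x ⬝ᵥ (KψW *ᵥ x) := by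
    intro x
    have h := hlmin.1 (fun i => ψ (w i) * x i)
    have e1 : (fun i => ψ (w i) * x i) ⬝ᵥ (fun i => ψ (w i) * x i) = x ⬝ᵥ x := by
      simp only [dotProduct]
      refine Finset.sum_congr rfl fun i _ => ?_
      have := hψ2 (w i); nlinarith [this]
    have e2 : (fun i => ψ (w i) * x i) ⬝ᵥ
        ((Matrix.of fun i j : Fin N => K (w i) (w j)) *ᵥ fun i => ψ (w i) * x i) =
        x ⬝ᵥ (KψW *ᵥ x) := by
      simp only [dotProduct, mulVec, Matrix.of_apply, Finset.mul_sum]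
      refine Finset.sum_congr rfl fun i _ => Finset.sum_congr rfl fun j _ => ?_
      rw [hKψW]
      simp only [Matrix.of_apply]
      rw [hent]
      ring
    rw [e1, e2] at h
    exact h
  -- (*) : lmin * xᵀA⁻¹x ≤ xᵀx
  have hstar : ∀ x : Fin N → ℝ, lmin * (x ⬝ᵥ (KψW⁻¹ *ᵥ x)) ≤ x ⬝ᵥ x := by
    intro x
    set p := KψW⁻¹ *ᵥ x with hp
    have hApx : KψW *ᵥ p = x := by rw [hp, mulVec_mulVec, hA1, one_mulVec]
    have h1 : lmin * (p ⬝ᵥ p) ≤ p ⬝ᵥ x := by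
      have := hAlow p; rwa [hApx] at this
    have hq : x ⬝ᵥ p = p ⬝ᵥ x := dotProduct_comm _ _
    have hqnn : 0 ≤ x ⬝ᵥ p := by simpa using hAinvPSD.dotProduct_mulVec_nonneg x
    have hxx : 0 ≤ x ⬝ᵥ x := Finset.sum_nonneg fun i _ => mul_self_nonneg _
    have hpp : 0 ≤ p ⬝ᵥ p := Finset.sum_nonneg fun i _ => mul_self_nonneg _
    have hcs : (x ⬝ᵥ p)^2 ≤ (x ⬝ᵥ x) * (p ⬝ᵥ p) := by
      simpa [dotProduct, pow_two] using Finset.sum_mul_sq_le_sq_mul_sq Finset.univ x p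
    rcases eq_or_lt_of_le hqnn with h | h
    · rw [← h, mul_zero]; exact hxx
    · have key : lmin * (x ⬝ᵥ p) * (x ⬝ᵥ p) ≤ (x ⬝ᵥ x) * (x ⬝ᵥ p) := by
        nlinarith [mul_le_mul_of_nonneg_left hcs hlmin0,
          mul_le_mul_of_nonneg_left h1 hxx, hq]
      exact le_of_mul_le_mul_right key h
  -- (ii) pointwise
  have hBbound : ∀ x : Fin N → ℝ, (lmin + t)^2 * (x ⬝ᵥ (KψW⁻¹ *ᵥ x)) ≤
      (B *ᵥ x) ⬝ᵥ (KψW⁻¹ *ᵥ (B *ᵥ x)) := by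
    intro x
    have hBx : B *ᵥ x = KψW *ᵥ x + t • x := by
      rw [hB, add_mulVec, smul_mulVec, one_mulVec]
    set g := KψW *ᵥ x with hg
    have hexp : (g + t • x) ⬝ᵥ (KψW⁻¹ *ᵥ (g + t • x)) =
        g ⬝ᵥ (KψW⁻¹ *ᵥ g) + 2*t*(x ⬝ᵥ (KψW⁻¹ *ᵥ g)) + t^2 * (x ⬝ᵥ (KψW⁻¹ *ᵥ x)) := by
      rw [mulVec_add, mulVec_smul, dotProduct_add, add_dotProduct, add_dotProduct,
        dotProduct_smul, smul_dotProduct, smul_dotProduct, dotProduct_smul,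
        dot_symm hAinvt g x]
      simp only [smul_eq_mul]; ring
    have hg1 : KψW⁻¹ *ᵥ g = x := by rw [hg, mulVec_mulVec, hA2, one_mulVec]
    rw [hBx, hexp, hg1]
    have h1 := hAlow x
    have h2 := hstar x
    have hgx : g ⬝ᵥ x = x ⬝ᵥ g := dotProduct_comm _ _
    have hxg : x ⬝ᵥ g = x ⬝ᵥ (KψW *ᵥ x) := by rw [hg]
    have hqnn : 0 ≤ x ⬝ᵥ (KψW⁻¹ *ᵥ x) := by simpa using hAinvPSD.dotProduct_mulVec_nonneg x
    have hxx : 0 ≤ x ⬝ᵥ x := Finset.sum_nonneg fun i _ => mul_self_nonneg _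
    nlinarith [mul_le_mul_of_nonneg_left h2 hlmin0,
      mul_le_mul_of_nonneg_left h2 htpos.le, h1, hgx, hxg]
  -- (i) : q1 ≤ K v v
  have hKvv : Kψ v v = K v v := by
    rw [hent v v]; rcases hψ v with h | h <;> rw [h] <;> ring
  have hq1 : k ⬝ᵥ (KψW⁻¹ *ᵥ k) ≤ K v v := by
    set cp := KψW⁻¹ *ᵥ k with hcp
    have hKcp : KψW *ᵥ cp = k := by rw [hcp, mulVec_mulVec, hA1, one_mulVec]
    set e : Fin n → ℝ := Pi.single v 1 with he
    have h0 : 0 ≤ (e - ext w cp) ⬝ᵥ (Kψ *ᵥ (e - ext w cp)) := by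
      simpa using hKψPD.posSemidef.dotProduct_mulVec_nonneg (e - ext w cp)
    have he1 : e ⬝ᵥ (Kψ *ᵥ e) = Kψ v v := by
      rw [he]; simp [Matrix.mulVec_single, single_dotProduct]
    have he2 : e ⬝ᵥ (Kψ *ᵥ ext w cp) = cp ⬝ᵥ k := by
      rw [mulVec_ext, he, single_dotProduct, one_mul]
      simp [dotProduct, hk]
    have he3 : ext w cp ⬝ᵥ (Kψ *ᵥ e) = cp ⬝ᵥ k := by
      rw [dot_symm hKψt]; exact he2
    have he4 : ext w cp ⬝ᵥ (Kψ *ᵥ ext w cp) = cp ⬝ᵥ k := by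
      rw [ext_quad, ← hKψW, hKcp]
    have hcpk : cp ⬝ᵥ k = k ⬝ᵥ (KψW⁻¹ *ᵥ k) := by
      rw [dotProduct_comm, hcp]
    have hzexp : (e - ext w cp) ⬝ᵥ (Kψ *ᵥ (e - ext w cp)) =
        Kψ v v - k ⬝ᵥ (KψW⁻¹ *ᵥ k) := by
      rw [mulVec_sub, dotProduct_sub, sub_dotProduct, sub_dotProduct,
        he1, he2, he3, he4, hcpk]
      ring
    rw [hzexp] at h0
    linarith [hKvv ▸ h0]
  -- (iii) : qy ≤ Y
  have hKdet : IsUnit Kψ.det := isUnit_iff_ne_zero.2 hKψPD.det_pos.ne'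
  have hKψ1 : Kψ * Kψ⁻¹ = 1 := mul_nonsing_inv _ hKdet
  have hqyY : yW ⬝ᵥ (KψW⁻¹ *ᵥ yW) ≤ y ⬝ᵥ (Kψ⁻¹ *ᵥ y) := by
    set cy := KψW⁻¹ *ᵥ yW with hcy
    have hKcy : KψW *ᵥ cy = yW := by rw [hcy, mulVec_mulVec, hA1, one_mulVec]
    have hKG : Kψ *ᵥ (Kψ⁻¹ *ᵥ y) = y := by rw [mulVec_mulVec, hKψ1, one_mulVec]
    have h0 : 0 ≤ (ext w cy - Kψ⁻¹ *ᵥ y) ⬝ᵥ (Kψ *ᵥ (ext w cy - Kψ⁻¹ *ᵥ y)) := by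
      simpa using hKψPD.posSemidef.dotProduct_mulVec_nonneg (ext w cy - Kψ⁻¹ *ᵥ y)
    have p1 : ext w cy ⬝ᵥ (Kψ *ᵥ ext w cy) = yW ⬝ᵥ (KψW⁻¹ *ᵥ yW) := by
      rw [ext_quad, ← hKψW, hKcy, dotProduct_comm, hcy]
    have p2 : ext w cy ⬝ᵥ (Kψ *ᵥ (Kψ⁻¹ *ᵥ y)) = yW ⬝ᵥ (KψW⁻¹ *ᵥ yW) := by
      rw [hKG, ext_dot, hcy]
      rw [dotProduct_comm]
      simp [dotProduct, hyW]
    have p3 : (Kψ⁻¹ *ᵥ y) ⬝ᵥ (Kψ *ᵥ ext w cy) = yW ⬝ᵥ (KψW⁻¹ *ᵥ yW) := by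
      rw [dot_symm hKψt]; exact p2
    have p4 : (Kψ⁻¹ *ᵥ y) ⬝ᵥ (Kψ *ᵥ (Kψ⁻¹ *ᵥ y)) = y ⬝ᵥ (Kψ⁻¹ *ᵥ y) := by
      rw [hKG, dotProduct_comm]
    have hzexp : (ext w cy - Kψ⁻¹ *ᵥ y) ⬝ᵥ (Kψ *ᵥ (ext w cy - Kψ⁻¹ *ᵥ y)) =
        y ⬝ᵥ (Kψ⁻¹ *ᵥ y) - yW ⬝ᵥ (KψW⁻¹ *ᵥ yW) := by
      rw [mulVec_sub, dotProduct_sub, sub_dotProduct, sub_dotProduct, p1, p2, p3, p4]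
      ring
    rw [hzexp] at h0
    linarith
  -- final assembly
  have hq2b : (lmin + t)^2 * (u ⬝ᵥ (KψW⁻¹ *ᵥ u)) ≤ yW ⬝ᵥ (KψW⁻¹ *ᵥ yW) := by
    have h := hBbound u
    have hBu : B *ᵥ u = yW := by rw [hu, mulVec_mulVec, hB1, one_mulVec]
    rwa [hBu] at h
  have hq2nn : 0 ≤ u ⬝ᵥ (KψW⁻¹ *ᵥ u) := by simpa using hAinvPSD.dotProduct_mulVec_nonneg u
  have hYnn : 0 ≤ y ⬝ᵥ (Kψ⁻¹ *ᵥ y) := by simpa using hKψPD.inv.posSemidef.dotProduct_mulVec_nonneg y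
  have hKvvnn : 0 ≤ K v v := by
    simpa [Matrix.mulVec_single, single_dotProduct] using
      hK.posSemidef.dotProduct_mulVec_nonneg (Pi.single v (1:ℝ))
  have hs : 0 < lmin + t := by linarith
  set S := k ⬝ᵥ (KψW⁻¹ *ᵥ u) with hS
  have hcs : S^2 ≤ (k ⬝ᵥ (KψW⁻¹ *ᵥ k)) * (u ⬝ᵥ (KψW⁻¹ *ᵥ u)) := psd_cauchy hAinvPSD k u
  have key : ((lmin + t) * |S|)^2 ≤ K v v * (y ⬝ᵥ (Kψ⁻¹ *ᵥ y)) :=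
    calc ((lmin + t) * |S|)^2 = (lmin + t)^2 * S^2 := by rw [mul_pow, sq_abs]
      _ ≤ (lmin + t)^2 * (K v v * (u ⬝ᵥ (KψW⁻¹ *ᵥ u))) := by
          refine mul_le_mul_of_nonneg_left ?_ (sq_nonneg _)
          exact le_trans hcs (mul_le_mul_of_nonneg_right hq1 hq2nn)
      _ = K v v * ((lmin + t)^2 * (u ⬝ᵥ (KψW⁻¹ *ᵥ u))) := by ring
      _ ≤ K v v * (yW ⬝ᵥ (KψW⁻¹ *ᵥ yW)) := mul_le_mul_of_nonneg_left hq2b hKvvnn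
      _ ≤ K v v * (y ⬝ᵥ (Kψ⁻¹ *ᵥ y)) := mul_le_mul_of_nonneg_left hqyY hKvvnn
  have habs : (lmin + t) * |S| ≤ Real.sqrt (K v v) * Real.sqrt (y ⬝ᵥ (Kψ⁻¹ *ᵥ y)) := by
    have h1 : 0 ≤ (lmin + t) * |S| := mul_nonneg hs.le (abs_nonneg _)
    calc (lmin + t) * |S| = Real.sqrt (((lmin + t) * |S|)^2) := (Real.sqrt_sq h1).symm
      _ ≤ Real.sqrt (K v v * (y ⬝ᵥ (Kψ⁻¹ *ᵥ y))) := Real.sqrt_le_sqrt key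
      _ = Real.sqrt (K v v) * Real.sqrt (y ⬝ᵥ (Kψ⁻¹ *ᵥ y)) := Real.sqrt_mul hKvvnn _
  rw [hdiff, abs_mul, abs_of_pos htpos]
  have hrw : t * |S| = (t / (lmin + t)) * ((lmin + t) * |S|) := by
    field_simp
  rw [hrw]
  calc (t / (lmin + t)) * ((lmin + t) * |S|)
      ≤ (t / (lmin + t)) * (Real.sqrt (K v v) * Real.sqrt (y ⬝ᵥ (Kψ⁻¹ *ᵥ y))) := by
        refine mul_le_mul_of_nonneg_left habs ?_
        positivity
    _ = (t * Real.sqrt (K v v) / (lmin + t)) * Real.sqrt (y ⬝ᵥ (Kψ⁻¹ *ᵥ y)) := by ring
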